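/- Let ℓ ≥ 0, let b_{−ℓ},…,b_0,…,b_ℓ ∈ {1,…,k}, and let J ⊆ M be an open set such that A_F ∩ (f_{b_{−1}}∘⋯∘f_{b_{−ℓ}})^{−1}(J) ≠ ∅ (with the empty composition equal to the identity when ℓ = 0). Then for every nonempty open set Q ⊆ Σ_k^+ = {1,…,k}^ℕ there exists n_0 ≥ 0 such that for every n ≥ n_0 there is a one-sided sequence ξ ∈ Q with F^n({ϑ ∈ Σ_k : ϑ_i = ξ_i for all i ≥ 0} × M) ⊆ [−ℓ; b_{−ℓ}…b_ℓ] × J, where [−ℓ; b_{−ℓ}…b_ℓ] = {ϑ ∈ Σ_k : ϑ_i = b_i for −ℓ ≤ i ≤ ℓ}. -/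

import Mathlib

open Set Function Filter Topology

noncomputable section

/-- The shift map on two-sided sequences. -/
def shiftMap {k : ℕ} (θ : ℤ → Fin k) : ℤ → Fin k := fun i => θ (i + 1)

/-- The step skew product `F(θ, x) = (σ θ, f_{θ₀} x)`. -/
def skewProd {k : ℕ} {M : Type*} (f : Fin k → M → M) :
    (ℤ → Fin k) × M → (ℤ → Fin k) × M :=
  fun p => (shiftMap p.1, f (p.1 0) p.2)

/-- Backward composition `f_{θ₋₁} ∘ ⋯ ∘ f_{θ₋ₙ}`. -/
def bcomp {k : ℕ} {M : Type*} (f : Fin k → M → M) (θ : ℤ → Fin k) : ℕ → M → M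
  | 0 => id
  | n + 1 => bcomp f θ n ∘ f (θ (-((n : ℤ) + 1)))

/-- The spine `I_θ = ⋂_{n ≥ 1} f_{θ₋₁} ∘ ⋯ ∘ f_{θ₋ₙ}(M)`. -/
def spine {k : ℕ} {M : Type*} (f : Fin k → M → M) (θ : ℤ → Fin k) : Set M :=
  ⋂ n : ℕ, bcomp f θ (n + 1) '' Set.univ

/-- The set of weakly hyperbolic sequences: those `θ` whose spine is a singleton. -/
def weakHyp {k : ℕ} {M : Type*} (f : Fin k → M → M) : Set (ℤ → Fin k) :=
  {θ | ∃ x : M, spine f θ = {x}}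

/-- The ω-limit set of a point `z` under iteration of `F`: limits of subsequences
`F^{n_j}(z)` with `n_j → ∞`. -/
def omegaLim {α : Type*} [TopologicalSpace α] (F : α → α) (z : α) : Set α :=
  {w | ∃ φ : ℕ → ℕ, StrictMono φ ∧ Tendsto (fun j => F^[φ j] z) atTop (𝓝 w)}


/-- Forward composition `f_{θ_{n-1}} ∘ ⋯ ∘ f_{θ_0}`. -/
def fcomp {k : ℕ} {M : Type*} (f : Fin k → M → M) (θ : ℤ → Fin k) : ℕ → M → M
  | 0 => id
  | n + 1 => f (θ (n : ℤ)) ∘ fcomp f θ n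

lemma fcomp_shift {k : ℕ} {M : Type*} (f : Fin k → M → M) (θ : ℤ → Fin k) :
    ∀ (n : ℕ) (x : M), fcomp f (shiftMap θ) n (f (θ 0) x) = fcomp f θ (n + 1) x := by
  intro n
  induction n with
  | zero => intro x; rfl
  | succ n ih =>
    intro x
    show f (shiftMap θ (n : ℤ)) (fcomp f (shiftMap θ) n (f (θ 0) x))
        = f (θ ((n + 1 : ℕ) : ℤ)) (fcomp f θ (n + 1) x)
    rw [ih]
    have e : ((n : ℤ) + 1) = ((n + 1 : ℕ) : ℤ) := by push_cast; ring
    simp only [shiftMap]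
    rw [e]

lemma skewProd_iterate {k : ℕ} {M : Type*} (f : Fin k → M → M) :
    ∀ (n : ℕ) (θ : ℤ → Fin k) (x : M),
      (skewProd f)^[n] (θ, x) = (fun i => θ (i + n), fcomp f θ n x) := by
  intro n
  induction n with
  | zero =>
    intro θ x
    simp only [Function.iterate_zero, id_eq, Nat.cast_zero, add_zero]
    rfl
  | succ n ih =>
    intro θ x
    rw [Function.iterate_succ_apply]
    show (skewProd f)^[n] (shiftMap θ, f (θ 0) x) = _
    rw [ih]
    refine Prod.ext ?_ ?_
    · funext i
      show θ ((i + n) + 1) = θ (i + ((n + 1 : ℕ) : ℤ))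
      congr 1; push_cast; ring
    · exact fcomp_shift f θ n x

lemma fcomp_add {k : ℕ} {M : Type*} (f : Fin k → M → M) (θ : ℤ → Fin k) (p : ℕ) :
    ∀ (q : ℕ) (x : M),
      fcomp f θ (p + q) x = fcomp f (fun i => θ (i + p)) q (fcomp f θ p x) := by
  intro q
  induction q with
  | zero => intro x; rfl
  | succ q ih =>
    intro x
    show f (θ ((p + q : ℕ) : ℤ)) (fcomp f θ (p + q) x)
        = f (θ ((q : ℤ) + (p : ℤ))) (fcomp f (fun i => θ (i + p)) q (fcomp f θ p x))
    rw [ih]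
    congr 2
    push_cast; ring

lemma fcomp_eq_bcomp {k : ℕ} {M : Type*} (f : Fin k → M → M) :
    ∀ (m : ℕ) (η χ : ℤ → Fin k) (y : M),
      (∀ j : ℕ, j < m → η (j : ℤ) = χ ((j : ℤ) - m)) →
      fcomp f η m y = bcomp f χ m y := by
  intro m
  induction m with
  | zero => intros; rfl
  | succ m ih =>
    intro η χ y h
    rw [← fcomp_shift]
    have h0 : f (η 0) y = f (χ (-((m : ℤ) + 1))) y := by
      have h0' := h 0 (Nat.succ_pos m)
      have e : ((0 : ℕ) : ℤ) - ((m + 1 : ℕ) : ℤ) = -((m : ℤ) + 1) := by push_cast; ring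
      rw [e] at h0'
      rw [show η (0 : ℤ) = χ (-((m : ℤ) + 1)) from h0']
    rw [show bcomp f χ (m + 1) y = bcomp f χ m (f (χ (-((m : ℤ) + 1))) y) from rfl]
    rw [h0]
    apply ih
    intro j hj
    have h1 := h (j + 1) (by omega)
    show η ((j : ℤ) + 1) = χ ((j : ℤ) - m)
    have e1 : ((j + 1 : ℕ) : ℤ) = (j : ℤ) + 1 := by push_cast; ring
    rw [e1] at h1
    rw [h1]
    congr 1
    push_cast; ring

lemma bcomp_continuous {k : ℕ} {M : Type*} [TopologicalSpace M] (f : Fin k → M → M)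
    (hf : ∀ i, Continuous (f i)) (θ : ℤ → Fin k) : ∀ n, Continuous (bcomp f θ n) := by
  intro n
  induction n with
  | zero => exact continuous_id
  | succ n ih => exact ih.comp (hf _)

lemma exists_bcomp_image_subset {k : ℕ} {M : Type*} [MetricSpace M] [CompactSpace M]
    (f : Fin k → M → M) (hf : ∀ i, Continuous (f i)) (θ : ℤ → Fin k) (x : M)
    (hs : spine f θ = {x}) {U : Set M} (hU : IsOpen U) (hx : x ∈ U) :
    ∃ m : ℕ, bcomp f θ (m + 1) '' Set.univ ⊆ U := by
  by_contra hcon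
  push_neg at hcon
  set C : ℕ → Set M := fun n => bcomp f θ (n + 1) '' Set.univ ∩ Uᶜ with hC
  have hanti : ∀ n, bcomp f θ (n + 1) '' Set.univ ⊆ bcomp f θ n '' Set.univ := by
    intro n
    rw [show bcomp f θ (n + 1) = bcomp f θ n ∘ f (θ (-((n : ℤ) + 1))) from rfl, image_comp]
    exact image_mono (subset_univ _)
  have hKanti : Antitone (fun n => bcomp f θ n '' (Set.univ : Set M)) :=
    antitone_nat_of_succ_le hanti
  have hCanti : Antitone C := fun a b hab =>
    inter_subset_inter (hKanti (by omega)) subset_rfl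
  have hne : ∀ n, (C n).Nonempty := by
    intro n
    obtain ⟨p, hp1, hp2⟩ := not_subset.mp (hcon n)
    exact ⟨p, hp1, hp2⟩
  have hcomp : ∀ n, IsCompact (C n) :=
    fun n => ((isCompact_univ.image (bcomp_continuous f hf θ (n + 1))).inter_right
      hU.isClosed_compl)
  obtain ⟨p, hp⟩ := IsCompact.nonempty_iInter_of_directed_nonempty_isCompact_isClosed C
    (hCanti.directed_ge) hne hcomp (fun n => (hcomp n).isClosed)
  have hps : p ∈ spine f θ := by
    rw [spine, mem_iInter]
    intro n
    exact ((mem_iInter.mp hp) n).1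
  rw [hs] at hps
  exact ((mem_iInter.mp hp) 0).2 (hps ▸ hx)

/-- Lemma about reaching a cylinder × open set: if the target set `A_F = ρ(S_F)` meets
`(f_{b₋₁} ∘ ⋯ ∘ f_{b₋ℓ})⁻¹(J)` for an open `J ⊆ M`, then for every nonempty open set
`Q` of one-sided sequences there is `n₀` such that for every `n ≥ n₀` some `ξ ∈ Q`
satisfies `Fⁿ([ξ] × M) ⊆ [−ℓ; b₋ℓ … b_ℓ] × J`. -/
theorem image_of_cylinder_enters_open_set
    {k : ℕ} (hk : 1 ≤ k) {M : Type*} [MetricSpace M] [CompactSpace M] [Nonempty M]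
    (f : Fin k → M → M) (hf : ∀ i, Continuous (f i))
    (ρ : (ℤ → Fin k) → M) (hρ : ∀ θ ∈ weakHyp f, spine f θ = {ρ θ})
    (ℓ : ℕ) (b : ℤ → Fin k) (J : Set M) (hJ : IsOpen J)
    (hmeet : ((ρ '' weakHyp f) ∩ (bcomp f b ℓ) ⁻¹' J).Nonempty) :
    ∀ Q : Set (ℕ → Fin k), IsOpen Q → Q.Nonempty →
      ∃ n₀ : ℕ, ∀ n : ℕ, n₀ ≤ n → ∃ ξ ∈ Q,
        (skewProd f)^[n] ''
            ({θ : ℤ → Fin k | ∀ i : ℕ, θ (i : ℤ) = ξ i} ×ˢ (Set.univ : Set M)) ⊆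
          {θ : ℤ → Fin k | ∀ i : ℤ, -(ℓ : ℤ) ≤ i → i ≤ (ℓ : ℤ) → θ i = b i} ×ˢ J := by
  obtain ⟨x, ⟨θs, hθs, rfl⟩, hxJ⟩ := hmeet
  have hspine : spine f θs = {ρ θs} := hρ θs hθs
  have hUopen : IsOpen (bcomp f b ℓ ⁻¹' J) := hJ.preimage (bcomp_continuous f hf b ℓ)
  obtain ⟨m', hm'⟩ := exists_bcomp_image_subset f hf θs (ρ θs) hspine hUopen hxJ
  set m : ℕ := m' + 1 with hm
  intro Q hQ hQne
  obtain ⟨ξ0, hξ0⟩ := hQne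
  obtain ⟨I, u, hu, hsub⟩ := isOpen_pi_iff.mp hQ ξ0 hξ0
  set N : ℕ := I.sup id + 1 with hN
  refine ⟨N + m + ℓ, ?_⟩
  intro n hn
  set n' : ℕ := n - (m + ℓ) with hn'def
  have hnn : n' + (m + ℓ) = n := Nat.sub_add_cancel (by omega)
  have hNn' : N ≤ n' := by omega
  set ξ : ℕ → Fin k := fun j =>
    if j < n' then ξ0 j
    else if j < n' + m then θs ((j : ℤ) - ((n' : ℤ) + (m : ℤ)))
    else b ((j : ℤ) - (n : ℤ)) with hξdef
  refine ⟨ξ, ?_, ?_⟩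
  · apply hsub
    intro i hi
    have hiN : i < n' := by
      have := Finset.le_sup (f := id) hi
      simp only [id] at this
      omega
    simp only [hξdef, if_pos hiN]
    exact (hu i hi).2
  · rintro ⟨θ', y⟩ ⟨⟨θ, x0⟩, ⟨hθmem, -⟩, heq⟩
    have hθm : ∀ i : ℕ, θ (i : ℤ) = ξ i := hθmem
    rw [skewProd_iterate] at heq
    rw [← heq]
    refine ⟨?_, ?_⟩
    · -- cylinder condition
      intro i hi1 hi2
      have hin : (0 : ℤ) ≤ i + n := by omega
      set j : ℕ := (i + n).toNat with hjdef
      have hj : (j : ℤ) = i + n := Int.toNat_of_nonneg hin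
      show θ (i + n) = b i
      have hθj : θ (i + n) = ξ j := by rw [← hj]; exact hθmem j
      rw [hθj]
      have h1 : ¬ j < n' := by omega
      have h2 : ¬ j < n' + m := by omega
      simp only [hξdef, if_neg h1, if_neg h2]
      congr 1
      omega
    · -- landing in J
      show fcomp f θ n x0 ∈ J
      have e1 : fcomp f θ n x0
          = fcomp f (fun i => θ (i + n')) (m + ℓ) (fcomp f θ n' x0) := by
        conv_lhs => rw [← hnn]
        exact fcomp_add f θ n' (m + ℓ) x0
      set w : M := fcomp f θ n' x0 with hwdef
      have e2 : fcomp f (fun i => θ (i + n')) (m + ℓ) w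
          = fcomp f (fun i => θ ((i + m) + n')) ℓ
              (fcomp f (fun i => θ (i + n')) m w) :=
        fcomp_add f (fun i => θ (i + n')) m ℓ w
      have e3 : fcomp f (fun i => θ (i + n')) m w = bcomp f θs m w := by
        apply fcomp_eq_bcomp
        intro j hjm
        show θ ((j : ℤ) + n') = θs ((j : ℤ) - m)
        have hc : ((j + n' : ℕ) : ℤ) = (j : ℤ) + n' := by push_cast; ring
        rw [← hc, hθm (j + n')]
        have h1 : ¬ j + n' < n' := by omega
        have h2 : j + n' < n' + m := by omega
        simp only [hξdef, if_neg h1, if_pos h2]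
        congr 1
        push_cast; ring
      have e4 : fcomp f (fun i => θ ((i + m) + n')) ℓ (bcomp f θs m w)
          = bcomp f b ℓ (bcomp f θs m w) := by
        apply fcomp_eq_bcomp
        intro j hjl
        show θ (((j : ℤ) + m) + n') = b ((j : ℤ) - ℓ)
        have hc : ((j + m + n' : ℕ) : ℤ) = ((j : ℤ) + m) + n' := by push_cast; ring
        rw [← hc, hθm (j + m + n')]
        have h1 : ¬ j + m + n' < n' := by omega
        have h2 : ¬ j + m + n' < n' + m := by omega
        simp only [hξdef, if_neg h1, if_neg h2]
        congr 1
        omega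
      have hz : bcomp f θs m w ∈ bcomp f b ℓ ⁻¹' J := by
        apply hm'
        exact ⟨w, mem_univ w, rfl⟩
      rw [e1, e2, e3, e4]
      exact hz
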